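/- Let R be a commutative noetherian ring, S a left noetherian ring which is an R-algebra, and K, J ideals of R. Let L be an R-elementary S-module with p := Ann_R(L), and let E be an injective S-module containing L as an essential S-submodule (i.e., E is an injective hull of L). Then: (a) if p ∈ W(K,J), then Γ_{K,J}(E) = E; (b) if p ∉ W(K,J), then Γ_{K,J}(E) = 0; and (c) if m is a maximal ideal of R with p ⊄ m, then the localization E_m of E (as an R-module) at m is zero. -/

import Mathlib

/-- Annihilator in `R` of an `S`-submodule, `R` acting through `algebraMap R S`. -/
def annRS (R : Type*) {S M : Type*} [CommRing R] [Ring S] [Algebra R S]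
    [AddCommGroup M] [Module S M] (N : Submodule S M) : Ideal R where
  carrier := {r : R | ∀ x ∈ N, algebraMap R S r • x = 0}
  zero_mem' := by intro x _; simp
  add_mem' := by
    intro a b ha hb x hx
    rw [map_add, add_smul, ha x hx, hb x hx, add_zero]
  smul_mem' := by
    intro c a ha x hx
    rw [smul_eq_mul, map_mul, mul_smul, ha x hx, smul_zero]

/-- An `R`-elementary object: nonzero, finitely generated, and the `R`-annihilator of
every nonzero subobject equals a fixed prime ideal `p` of `R`. -/
def IsRElem (R : Type*) {S M : Type*} [CommRing R] [Ring S] [Algebra R S]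
    [AddCommGroup M] [Module S M] (L : Submodule S M) : Prop :=
  L ≠ ⊥ ∧ L.FG ∧ ∃ p : Ideal R, p.IsPrime ∧
    ∀ L' : Submodule S M, L' ≤ L → L' ≠ ⊥ → annRS R L' = p
/-- `Γ_{I,J}` of a module. -/
def gammaIJ (R S : Type*) [CommRing R] [Ring S] [Algebra R S] (I J : Ideal R)
    (M : Type*) [AddCommGroup M] [Module S M] : Submodule S M :=
  sSup {N : Submodule S M | N.FG ∧ ∃ n, 1 ≤ n ∧ I ^ n ≤ annRS R N ⊔ J}

/-- `W(I,J)`, the nonclosed support attached to the pair of ideals `(I,J)`. -/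
def WIJ {R : Type*} [CommRing R] (I J : Ideal R) : Set (Ideal R) :=
  {p | p.IsPrime ∧ ∃ n, 1 ≤ n ∧ I ^ n ≤ p ⊔ J}


section Aux

lemma supPowLe {R : Type*} [CommRing R] (A B : Ideal R) : ∀ t, (A ⊔ B) ^ t ≤ A ^ t ⊔ B := by
  intro t
  induction t with
  | zero => simp
  | succ t ih =>
    rw [pow_succ]
    calc (A ⊔ B) ^ t * (A ⊔ B) ≤ (A ^ t ⊔ B) * (A ⊔ B) := Ideal.mul_mono_left ih
      _ ≤ A ^ (t + 1) ⊔ B := by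
        rw [Ideal.sup_mul, Ideal.mul_sup, Ideal.mul_sup]
        refine sup_le (sup_le ?_ ?_) (sup_le ?_ ?_)
        · rw [← pow_succ]; exact le_sup_left
        · exact le_sup_of_le_right Ideal.mul_le_right
        · exact le_sup_of_le_right Ideal.mul_le_left
        · exact le_sup_of_le_right Ideal.mul_le_right

lemma algSmulComm {R S E : Type*} [CommRing R] [Ring S] [Algebra R S]
    [AddCommGroup E] [Module S E] (a : R) (c : S) (y : E) :
    algebraMap R S a • c • y = c • (algebraMap R S a • y) := by
  rw [smul_smul, smul_smul, Algebra.commutes]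

lemma locNilp {R S E : Type*} [CommRing R] [Ring S] [IsNoetherianRing S]
    [Algebra R S] [AddCommGroup E] [Module S E]
    (L : Submodule S E)
    (hess : ∀ N' : Submodule S E, N' ≠ ⊥ → L ⊓ N' ≠ ⊥)
    (r : R) (hr : ∀ y ∈ L, algebraMap R S r • y = 0) (x : E) :
    ∃ t, algebraMap R S (r ^ t) • x = 0 := by
  set Kk : ℕ → Submodule S E := fun i =>
    { carrier := {y | algebraMap R S (r ^ i) • y = 0}
      add_mem' := by
        intro y z hy hz
        simp only [Set.mem_setOf_eq] at *
        rw [smul_add, hy, hz, add_zero]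
      zero_mem' := smul_zero _
      smul_mem' := by
        intro c y hy
        simp only [Set.mem_setOf_eq] at *
        rw [algSmulComm, hy, smul_zero] } with hKk
  have hKmem : ∀ i (y : E), y ∈ Kk i ↔ algebraMap R S (r ^ i) • y = 0 := fun _ _ => Iff.rfl
  have hmono : ∀ i j, i ≤ j → Kk i ≤ Kk j := by
    intro i j hij y hy
    obtain ⟨k, rfl⟩ := Nat.exists_eq_add_of_le hij
    rw [hKmem] at hy ⊢
    rw [pow_add, mul_comm, map_mul, mul_smul, hy, smul_zero]
  set N : Submodule S E := Submodule.span S {x} with hN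
  haveI : IsNoetherian S N := isNoetherian_of_fg_of_noetherian _ (Submodule.fg_span_singleton x)
  set D : ℕ →o Submodule S N :=
    ⟨fun i => (Kk i).comap N.subtype, fun i j h => Submodule.comap_mono (hmono i j h)⟩ with hD
  obtain ⟨n, hn⟩ := monotone_stabilizes_iff_noetherian.mpr inferInstance D
  refine ⟨n, ?_⟩
  by_contra h0
  have hz : Submodule.span S {algebraMap R S (r ^ n) • x} ≠ ⊥ := by
    simpa [Submodule.span_singleton_eq_bot] using h0
  obtain ⟨y, hy, hyne⟩ := (Submodule.ne_bot_iff _).mp (hess _ hz)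
  obtain ⟨hyL, hyz⟩ := Submodule.mem_inf.mp hy
  obtain ⟨s, hs⟩ := Submodule.mem_span_singleton.mp hyz
  have hsx : s • x ∈ N := Submodule.smul_mem _ s (Submodule.mem_span_singleton_self x)
  have h1 : s • x ∈ Kk (n + 1) := by
    rw [hKmem]
    calc algebraMap R S (r ^ (n + 1)) • s • x
        = s • (algebraMap R S (r ^ (n + 1)) • x) := algSmulComm _ _ _
      _ = s • (algebraMap R S r • (algebraMap R S (r ^ n) • x)) := by
          rw [pow_succ', map_mul, mul_smul]
      _ = algebraMap R S r • (s • (algebraMap R S (r ^ n) • x)) := (algSmulComm _ _ _).symm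
      _ = algebraMap R S r • y := by rw [hs]
      _ = 0 := hr y hyL
  have h2 : (⟨s • x, hsx⟩ : N) ∈ D (n + 1) := Submodule.mem_comap.mpr h1
  rw [← hn (n + 1) (Nat.le_succ n)] at h2
  have h3 : algebraMap R S (r ^ n) • (s • x) = 0 := (hKmem _ _).mp (Submodule.mem_comap.mp h2)
  refine hyne ?_
  rw [← hs]
  calc s • (algebraMap R S (r ^ n) • x)
      = algebraMap R S (r ^ n) • (s • x) := (algSmulComm _ _ _).symm
    _ = 0 := h3

end Aux

/-- Let `L` be an `R`-elementary `S`-submodule of an injective `S`-module `E` in which it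
is essential (so `E` is an injective hull of `L`), and set `p := Ann_R(L)`. Then:
(a) if `p ∈ W(K,J)` then `Γ_{K,J}(E) = E`; (b) if `p ∉ W(K,J)` then `Γ_{K,J}(E) = 0`;
(c) if `m` is a maximal ideal of `R` not containing `p`, then `E_m = 0`. -/
theorem gammaIJ_injective_hull_of_elementary
    (R S E : Type*) [CommRing R] [IsNoetherianRing R] [Ring S] [IsNoetherianRing S]
    [Algebra R S] [AddCommGroup E] [Module S E] [Module R E] [IsScalarTower R S E]
    (K J : Ideal R) (hE : Module.Injective S E)
    (L : Submodule S E) (hL : IsRElem R L)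
    (hess : ∀ N' : Submodule S E, N' ≠ ⊥ → L ⊓ N' ≠ ⊥) :
    (annRS R L ∈ WIJ K J → gammaIJ R S K J E = ⊤) ∧
    (annRS R L ∉ WIJ K J → gammaIJ R S K J E = ⊥) ∧
    (∀ (m : Ideal R) (hm : m.IsMaximal), ¬ annRS R L ≤ m →
      Subsingleton (LocalizedModule (@Ideal.primeCompl R _ m hm.isPrime) E)) := by
  obtain ⟨hLne, hLfg, p, hp, hps⟩ := hL
  have hpL : annRS R L = p := hps L le_rfl hLne
  have hmemL : ∀ r, r ∈ annRS R L ↔ ∀ y ∈ L, algebraMap R S r • y = 0 := fun _ => Iff.rfl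
  have key : ∀ r ∈ annRS R L, ∀ x : E, ∃ t, algebraMap R S (r ^ t) • x = 0 := by
    intro r hr x
    exact locNilp L hess r ((hmemL r).mp hr) x
  refine ⟨?_, ?_, ?_⟩
  · -- (a)
    rintro ⟨-, n, hn1, hKn⟩
    rw [eq_top_iff]
    intro x _
    have hrad : annRS R L ≤ (annRS R (Submodule.span S {x})).radical := by
      intro r hr
      obtain ⟨t, ht⟩ := key r hr x
      refine Ideal.mem_radical_iff.mpr ⟨t, ?_⟩
      intro y hy
      obtain ⟨s, rfl⟩ := Submodule.mem_span_singleton.mp hy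
      rw [algSmulComm, ht, smul_zero]
    obtain ⟨T, hT⟩ := Ideal.exists_pow_le_of_le_radical_of_fg hrad (IsNoetherian.noetherian _)
    have hT' : (annRS R L) ^ (T + 1) ≤ annRS R (Submodule.span S {x}) :=
      le_trans (Ideal.pow_le_pow_right (Nat.le_succ T)) hT
    have hmem : Submodule.span S {x} ∈
        {N : Submodule S E | N.FG ∧ ∃ n, 1 ≤ n ∧ K ^ n ≤ annRS R N ⊔ J} := by
      refine ⟨Submodule.fg_span_singleton x, n * (T + 1), ?_, ?_⟩
      · exact Nat.one_le_iff_ne_zero.mpr (Nat.mul_ne_zero (Nat.one_le_iff_ne_zero.mp hn1)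
          (Nat.succ_ne_zero T))
      · calc K ^ (n * (T + 1)) = (K ^ n) ^ (T + 1) := pow_mul K n (T + 1)
          _ ≤ (annRS R L ⊔ J) ^ (T + 1) := Ideal.pow_right_mono hKn _
          _ ≤ (annRS R L) ^ (T + 1) ⊔ J := supPowLe _ _ _
          _ ≤ annRS R (Submodule.span S {x}) ⊔ J := sup_le_sup_right hT' J
    exact le_sSup hmem (Submodule.mem_span_singleton_self x)
  · -- (b)
    intro hnw
    rw [eq_bot_iff]
    apply sSup_le
    rintro N ⟨hNfg, n, hn1, hKn⟩
    rcases eq_or_ne N ⊥ with rfl | hne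
    · exact le_rfl
    exfalso
    have hinf : annRS R (L ⊓ N) = p := hps (L ⊓ N) inf_le_left (hess N hne)
    have hle : annRS R N ≤ annRS R (L ⊓ N) := by
      intro r hr
      exact fun y hy => hr y (Submodule.mem_inf.mp hy).2
    refine hnw ⟨hpL ▸ hp, n, hn1, ?_⟩
    calc K ^ n ≤ annRS R N ⊔ J := hKn
      _ ≤ annRS R (L ⊓ N) ⊔ J := sup_le_sup_right hle J
      _ = annRS R L ⊔ J := by rw [hinf, hpL]
  · -- (c)
    intro m hm hpm
    obtain ⟨r, hr, hrm⟩ := SetLike.not_le_iff_exists.mp hpm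
    refine ⟨fun a b => ?_⟩
    suffices h : ∀ z : LocalizedModule (@Ideal.primeCompl R _ m hm.isPrime) E, z = 0 by
      rw [h a, h b]
    intro z
    induction z using LocalizedModule.induction_on with
    | _ x s =>
      obtain ⟨t, ht⟩ := key r hr x
      have hrt : (r ^ t : R) • x = 0 := by
        rw [← algebraMap_smul S (r ^ t) x]; exact ht
      have hu : r ^ t ∈ @Ideal.primeCompl R _ m hm.isPrime := pow_mem hrm t
      rw [← LocalizedModule.zero_mk s, LocalizedModule.mk_eq]
      refine ⟨⟨r ^ t, hu⟩, ?_⟩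
      rw [smul_zero, Submonoid.smul_def, Submonoid.smul_def, Submonoid.smul_def,
        smul_smul, mul_comm, ← smul_smul, hrt, smul_zero]
      exact (smul_zero _).symm
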